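/- Let p : ℝ → ℝ be a function with closed graph, and suppose p is continuous on the open interval (a, b) with b ∈ ℝ. Then exactly one of the following holds: lim_{x→b⁻} p(x) = p(b), lim_{x→b⁻} p(x) = +∞, or lim_{x→b⁻} p(x) = -∞. -/

import Mathlib

open Filter

private lemma cluster_eq_pb (p : ℝ → ℝ) (hgraph : IsClosed {q : ℝ × ℝ | q.2 = p q.1})
    (b y : ℝ) (h : MapClusterPt y (nhdsWithin b (Set.Iio b)) p) : y = p b := by
  have hmem : (b, y) ∈ closure {q : ℝ × ℝ | q.2 = p q.1} := by
    rw [mem_closure_iff_nhds]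
    intro U hU
    rw [mem_nhds_prod_iff] at hU
    obtain ⟨U₁, hU₁, U₂, hU₂, hsub⟩ := hU
    have h2 : ∃ᶠ x in nhdsWithin b (Set.Iio b), p x ∈ U₂ := mapClusterPt_iff_frequently.mp h U₂ hU₂
    have h1 : ∀ᶠ x in nhdsWithin b (Set.Iio b), x ∈ U₁ :=
      eventually_of_mem (nhdsWithin_le_nhds hU₁) fun x hx => hx
    obtain ⟨x, hx2, hx1⟩ := (h2.and_eventually h1).exists
    exact ⟨(x, p x), hsub ⟨hx1, hx2⟩, rfl⟩
  have := hgraph.closure_eq ▸ hmem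
  exact this

private lemma cluster_mem (p : ℝ → ℝ) (hgraph : IsClosed {q : ℝ × ℝ | q.2 = p q.1})
    (b : ℝ) {K : Set ℝ} (hK : IsCompact K)
    (hfreq : ∃ᶠ x in nhdsWithin b (Set.Iio b), p x ∈ K) : p b ∈ K := by
  have hne : (nhdsWithin b (Set.Iio b) ⊓ 𝓟 {x | p x ∈ K}).NeBot :=
    frequently_iff_neBot.mp hfreq
  have hfK : map p (nhdsWithin b (Set.Iio b) ⊓ 𝓟 {x | p x ∈ K}) ≤ 𝓟 K := by
    calc map p (nhdsWithin b (Set.Iio b) ⊓ 𝓟 {x | p x ∈ K})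
        ≤ map p (𝓟 {x | p x ∈ K}) := map_mono inf_le_right
      _ = 𝓟 (p '' {x | p x ∈ K}) := map_principal
      _ ≤ 𝓟 K := principal_mono.2 (by rintro y ⟨x, hx, rfl⟩; exact hx)
  obtain ⟨y, hyK, hy⟩ := hK.exists_clusterPt hfK
  have hmc : MapClusterPt y (nhdsWithin b (Set.Iio b)) p :=
    hy.mono (map_mono inf_le_left)
  rwa [← cluster_eq_pb p hgraph b y hmc]

private lemma freq_mem {g : ℝ → ℝ} {a b c d : ℝ} (hab : a < b)
    (hg : ContinuousOn g (Set.Ioo a b)) (hcd : c < d)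
    (h1 : ∃ᶠ x in nhdsWithin b (Set.Iio b), g x < c)
    (h2 : ∃ᶠ x in nhdsWithin b (Set.Iio b), d < g x) :
    ∃ᶠ x in nhdsWithin b (Set.Iio b), g x ∈ Set.Icc c d := by
  by_contra hcon
  rw [not_frequently] at hcon
  rw [eventually_iff, mem_nhdsLT_iff_exists_Ioo_subset] at hcon
  obtain ⟨a₀, ha₀, hsub⟩ := hcon
  have ha₁b : max a a₀ < b := max_lt hab ha₀
  have hIoo : Set.Ioo (max a a₀) b ∈ nhdsWithin b (Set.Iio b) := Ioo_mem_nhdsLT ha₁b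
  obtain ⟨x₁, hv₁, hm₁⟩ := (h1.and_eventually (eventually_of_mem hIoo fun x hx => hx)).exists
  obtain ⟨x₂, hv₂, hm₂⟩ := (h2.and_eventually (eventually_of_mem hIoo fun x hx => hx)).exists
  have hsubI : Set.uIcc x₁ x₂ ⊆ Set.Ioo (max a a₀) b :=
    Set.OrdConnected.uIcc_subset Set.ordConnected_Ioo hm₁ hm₂
  have hgc : ContinuousOn g (Set.uIcc x₁ x₂) :=
    hg.mono (hsubI.trans (Set.Ioo_subset_Ioo (le_max_left a a₀) le_rfl))
  have hcmem : c ∈ Set.uIcc (g x₁) (g x₂) := by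
    rw [Set.mem_uIcc]
    exact Or.inl ⟨le_of_lt hv₁, le_of_lt (lt_trans hcd hv₂)⟩
  obtain ⟨x, hxI, hgx⟩ := intermediate_value_uIcc hgc hcmem
  have hxIoo : x ∈ Set.Ioo (max a a₀) b := hsubI hxI
  have : g x ∉ Set.Icc c d := hsub ⟨lt_of_le_of_lt (le_max_right a a₀) hxIoo.1, hxIoo.2⟩
  exact this (by rw [hgx]; exact ⟨le_refl c, le_of_lt hcd⟩)

theorem stmt_4 (p : ℝ → ℝ) (hgraph : IsClosed {q : ℝ × ℝ | q.2 = p q.1})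
    (a b : ℝ) (hab : a < b) (hcont : ContinuousOn p (Set.Ioo a b)) :
    (Tendsto p (nhdsWithin b (Set.Iio b)) (nhds (p b)) ∧
      ¬ Tendsto p (nhdsWithin b (Set.Iio b)) atTop ∧
      ¬ Tendsto p (nhdsWithin b (Set.Iio b)) atBot) ∨
    (¬ Tendsto p (nhdsWithin b (Set.Iio b)) (nhds (p b)) ∧
      Tendsto p (nhdsWithin b (Set.Iio b)) atTop ∧
      ¬ Tendsto p (nhdsWithin b (Set.Iio b)) atBot) ∨
    (¬ Tendsto p (nhdsWithin b (Set.Iio b)) (nhds (p b)) ∧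
      ¬ Tendsto p (nhdsWithin b (Set.Iio b)) atTop ∧
      Tendsto p (nhdsWithin b (Set.Iio b)) atBot) := by
  have hdisj : ∀ (f₁ f₂ : Filter ℝ), Disjoint f₁ f₂ →
      Tendsto p (nhdsWithin b (Set.Iio b)) f₁ →
      Tendsto p (nhdsWithin b (Set.Iio b)) f₂ → False := by
    intro f₁ f₂ hd h₁ h₂
    have hle : map p (nhdsWithin b (Set.Iio b)) ≤ ⊥ := by
      rw [← hd.eq_bot]; exact le_inf h₁ h₂
    exact (map_neBot (f := nhdsWithin b (Set.Iio b)) (m := p)).ne (le_bot_iff.mp hle)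
  by_cases hT : Tendsto p (nhdsWithin b (Set.Iio b)) atTop
  · refine Or.inr (Or.inl ⟨?_, hT, ?_⟩)
    · exact fun h => hdisj _ _ (disjoint_nhds_atTop (p b)) h hT
    · exact fun h => hdisj _ _ disjoint_atBot_atTop h hT
  by_cases hB : Tendsto p (nhdsWithin b (Set.Iio b)) atBot
  · refine Or.inr (Or.inr ⟨?_, ?_, hB⟩)
    · exact fun h => hdisj _ _ (disjoint_nhds_atBot (p b)) h hB
    · exact hT
  refine Or.inl ⟨?_, hT, hB⟩
  -- extract frequent bounds
  obtain ⟨M, hM⟩ : ∃ M, ∃ᶠ x in nhdsWithin b (Set.Iio b), p x < M := by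
    rw [tendsto_atTop] at hT
    push_neg at hT
    obtain ⟨M, hM⟩ := hT
    exact ⟨M, (Filter.not_eventually.mp hM).mono fun x hx => not_not.mp hx⟩
  obtain ⟨m, hm⟩ : ∃ m, ∃ᶠ x in nhdsWithin b (Set.Iio b), m < p x := by
    rw [tendsto_atBot] at hB
    push_neg at hB
    obtain ⟨m, hm⟩ := hB
    exact ⟨m, (Filter.not_eventually.mp hm).mono fun x hx => not_not.mp hx⟩
  rw [Metric.tendsto_nhds]
  intro ε hε
  by_contra hcon
  rw [Filter.not_eventually] at hcon
  simp only [not_lt, Real.dist_eq] at hcon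
  -- hcon : ∃ᶠ x, ε ≤ |p x - p b|
  have hsplit : (∃ᶠ x in nhdsWithin b (Set.Iio b), p b + ε ≤ p x) ∨
      (∃ᶠ x in nhdsWithin b (Set.Iio b), p x ≤ p b - ε) := by
    rw [← Filter.frequently_or_distrib]
    refine hcon.mono fun x hx => ?_
    rcases le_abs.mp hx with h | h
    · exact Or.inl (by linarith)
    · exact Or.inr (by linarith)
  rcases hsplit with hhi | hlo
  · by_cases hlow : ∃ᶠ x in nhdsWithin b (Set.Iio b), p x < p b + ε/2
    · have hfm := freq_mem hab hcont (show p b + ε/2 < p b + 3*ε/4 by linarith) hlow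
        (hhi.mono fun x hx => by linarith)
      have h := (cluster_mem p hgraph b isCompact_Icc hfm).1
      linarith
    · rw [not_frequently] at hlow
      have hfm : ∃ᶠ x in nhdsWithin b (Set.Iio b),
          p x ∈ Set.Icc (p b + ε/2) (max M (p b + ε)) := by
        refine (hM.and_eventually hlow).mono fun x hx => ?_
        exact ⟨not_lt.mp hx.2, le_trans (le_of_lt hx.1) (le_max_left _ _)⟩
      have h := (cluster_mem p hgraph b isCompact_Icc hfm).1
      linarith
  · by_cases hhigh : ∃ᶠ x in nhdsWithin b (Set.Iio b), p b - ε/2 < p x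
    · have hfm := freq_mem hab hcont (show p b - 3*ε/4 < p b - ε/2 by linarith)
        (hlo.mono fun x hx => by linarith) hhigh
      have h := (cluster_mem p hgraph b isCompact_Icc hfm).2
      linarith
    · rw [not_frequently] at hhigh
      have hfm : ∃ᶠ x in nhdsWithin b (Set.Iio b),
          p x ∈ Set.Icc (min m (p b - ε)) (p b - ε/2) := by
        refine (hm.and_eventually hhigh).mono fun x hx => ?_
        exact ⟨le_trans (min_le_left _ _) (le_of_lt hx.1), not_lt.mp hx.2⟩
      have h := (cluster_mem p hgraph b isCompact_Icc hfm).2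
      linarith
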